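/- Fix an integer p ≥ 3 and let λ = 2cos(π/p). Let α = (3λ + √(λ² + 4))/2 and let (r_j) and (α_j) be the partial quotients and complete quotients produced by the λ-continued-fraction algorithm applied to α. Then r_0 = 3, r_j = 1 for 1 ≤ j ≤ p−3, and α_{p−2} = α; that is, α has the purely periodic λ-continued fraction with period (3,1,…,1) containing p−3 ones, exhibiting the maximal allowed run of consecutive ones. -/

import Mathlib

open Real Matrix Filter

noncomputable section

/-- `λ_p = 2 cos (π / p)`, the minimal translation length of the Hecke group `G_p`. -/
def heckeLambda (p : ℕ) : ℝ := 2 * Real.cos (Real.pi / p)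

/-- The matrix `S = [[1, λ], [0, 1]]`. -/
def Smat (l : ℝ) : Matrix (Fin 2) (Fin 2) ℝ := !![1, l; 0, 1]

/-- The matrix `T = [[0, -1], [1, 0]]`. -/
def Tmat : Matrix (Fin 2) (Fin 2) ℝ := !![0, -1; 1, 0]

/-- The matrix `U = S * T = [[λ, -1], [1, 0]]`. -/
def Umat (l : ℝ) : Matrix (Fin 2) (Fin 2) ℝ := !![l, -1; 1, 0]

/-- The matrix `S^r = [[1, rλ], [0, 1]]` for an integer exponent `r`. -/
def SmatZ (l : ℝ) (r : ℤ) : Matrix (Fin 2) (Fin 2) ℝ := !![1, (r : ℝ) * l; 0, 1]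

/-- Möbius (linear fractional) action of a `2 × 2` real matrix on a real number. -/
def mobius (M : Matrix (Fin 2) (Fin 2) ℝ) (x : ℝ) : ℝ :=
  (M 0 0 * x + M 0 1) / (M 1 0 * x + M 1 1)

/-- `U^k(0)`, the image of `0` under `k` iterations of the linear fractional
transformation `U : x ↦ λ - 1/x`; as a ratio of entries of the matrix power `U^k`. -/
def Uorbit (l : ℝ) (k : ℕ) : ℝ := ((Umat l) ^ k) 0 1 / ((Umat l) ^ k) 1 1

/-- The complete quotients `α_j` of the (negative) `λ`-continued fraction algorithm:
`α_0 = α`, `α_{j+1} = 1 / (r_j λ - α_j)` with `r_j = ⌊α_j / λ⌋ + 1`. -/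
def cq (l α : ℝ) : ℕ → ℝ
  | 0 => α
  | j + 1 => 1 / (((⌊cq l α j / l⌋ : ℝ) + 1) * l - cq l α j)

/-- The partial quotients `r_j = ⌊α_j / λ⌋ + 1` of the `λ`-continued fraction of `α`. -/
def pq (l α : ℝ) (j : ℕ) : ℤ := ⌊cq l α j / l⌋ + 1

/-- `S` as an element of `SL(2, ℝ)`. -/
def Sgen (l : ℝ) : Matrix.SpecialLinearGroup (Fin 2) ℝ :=
  ⟨!![1, l; 0, 1], by norm_num [Matrix.det_fin_two_of]⟩

/-- `T` as an element of `SL(2, ℝ)`. -/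
def Tgen : Matrix.SpecialLinearGroup (Fin 2) ℝ :=
  ⟨!![0, -1; 1, 0], by norm_num [Matrix.det_fin_two_of]⟩

/-- The Hecke group `G_p`, the subgroup of `SL(2, ℝ)` generated by `S` and `T`. -/
def heckeGroup (l : ℝ) : Subgroup (Matrix.SpecialLinearGroup (Fin 2) ℝ) :=
  Subgroup.closure {Sgen l, Tgen}

/-- `M = [[a, b], [c, d]]` fixes `α` as a linear fractional transformation, i.e.
`α` is a root of `c x² + (d - a) x - b = 0`. -/
def fixesQuad (M : Matrix.SpecialLinearGroup (Fin 2) ℝ) (α : ℝ) : Prop :=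
  M.1 1 0 * α ^ 2 + (M.1 1 1 - M.1 0 0) * α - M.1 0 1 = 0

/-- `α` is a hyperbolic fixed point of the Hecke group `G(λ)`. -/
def IsHypFixedPt (l α : ℝ) : Prop :=
  ∃ M ∈ heckeGroup l, 2 < |M.1 0 0 + M.1 1 1| ∧ fixesQuad M α

/-- `α` is a hyperbolic fixed point of `G(λ)` with Hecke conjugate `α'`
(the other root of the fixed-point quadratic). -/
def IsHypPair (l α α' : ℝ) : Prop :=
  ∃ M ∈ heckeGroup l, 2 < |M.1 0 0 + M.1 1 1| ∧ fixesQuad M α ∧ fixesQuad M α' ∧ α' ≠ α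

/-- A hyperbolic fixed point is `G_p`-reduced when its complete-quotient sequence is
purely periodic. -/
def GpReduced (l β : ℝ) : Prop :=
  IsHypFixedPt l β ∧ ∃ m, 1 ≤ m ∧ cq l β m = β

/-- The map `Φ_p : [0, ∞) → [0, ∞)`: `Φ_p(x) = T U^i (x)` when
`U^{p-i+1}(0) ≤ x < U^{p-i}(0)` for the (unique) `i` with `1 ≤ i ≤ p - 2`,
and `Φ_p(x) = x - λ` when `x ≥ λ`. -/
def Phi (p : ℕ) (l : ℝ) (x : ℝ) : ℝ :=
  @dite ℝ (∃ i : ℕ, 1 ≤ i ∧ i ≤ p - 2 ∧ Uorbit l (p - i + 1) ≤ x ∧ x < Uorbit l (p - i))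
    (Classical.propDecidable _)
    (fun h => mobius (Tmat * (Umat l) ^ h.choose) x)
    (fun _ => x - l)

/-- `C_{n-j, n}`: the partial convergents computed by downward recursion,
`C_{n,n} = r_n λ` and `C_{m,n} = r_m λ - 1 / C_{m+1,n}`. -/
def convAux (l α : ℝ) (n : ℕ) : ℕ → ℝ
  | 0 => (pq l α n : ℝ) * l
  | j + 1 => (pq l α (n - (j + 1)) : ℝ) * l - 1 / convAux l α n j

/-- The `n`-th convergent `C_n = C_{0,n}` of the `λ`-continued fraction of `α`. -/
def conv (l α : ℝ) (n : ℕ) : ℝ := convAux l α n n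

/-- The word `S^{r_0} T S^{r_1} T ⋯ S^{r_n} T`. -/
def cfWord (l : ℝ) (r : ℕ → ℤ) (n : ℕ) : Matrix (Fin 2) (Fin 2) ℝ :=
  ((List.range (n + 1)).map fun j => SmatZ l (r j) * Tmat).prod

noncomputable def tseq (l : ℝ) : ℕ → ℝ
  | 0 => 0
  | 1 => 1
  | j+2 => l * tseq l (j+1) - tseq l j

noncomputable def dseq (l a : ℝ) : ℕ → ℝ
  | 0 => a
  | 1 => 1
  | j+2 => l * dseq l a (j+1) - dseq l a j

lemma tseq_sin (θ : ℝ) : ∀ j : ℕ, tseq (2*Real.cos θ) j * Real.sin θ = Real.sin (j * θ) := by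
  have key : ∀ j : ℕ, tseq (2*Real.cos θ) j * Real.sin θ = Real.sin (j*θ) ∧
      tseq (2*Real.cos θ) (j+1) * Real.sin θ = Real.sin ((j+1:ℕ)*θ) := by
    intro j
    induction j with
    | zero => simp [tseq]
    | succ n ih =>
      refine ⟨ih.2, ?_⟩
      have h1 : ((n+2 : ℕ) : ℝ) * θ = ((n+1:ℕ):ℝ)*θ + θ := by push_cast; ring
      have h2 : Real.sin (n*θ) = Real.sin (((n+1:ℕ):ℝ)*θ - θ) := by norm_num; ring_nf
      have e1 := Real.sin_add (((n+1:ℕ):ℝ)*θ) θ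
      have e2 := Real.sin_sub (((n+1:ℕ):ℝ)*θ) θ
      have hu : tseq (2*Real.cos θ) (n+2) = 2*Real.cos θ * tseq (2*Real.cos θ) (n+1) - tseq (2*Real.cos θ) n := rfl
      rw [hu, h1, e1]
      have hn1 := ih.1
      have hn2 := ih.2
      rw [h2, e2] at hn1
      linear_combination (2*Real.cos θ)*hn2 - hn1
  exact fun j => (key j).1

lemma dseq_eq_tseq (l a : ℝ) : ∀ j : ℕ, dseq l a (j+1) = tseq l (j+1) - a * tseq l j := by
  have key : ∀ j : ℕ, dseq l a (j+1) = tseq l (j+1) - a * tseq l j ∧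
      dseq l a (j+2) = tseq l (j+2) - a * tseq l (j+1) := by
    intro j
    induction j with
    | zero => constructor <;> simp [dseq, tseq] <;> ring
    | succ n ih =>
      refine ⟨ih.2, ?_⟩
      have hd : dseq l a (n+3) = l * dseq l a (n+2) - dseq l a (n+1) := rfl
      have ht : tseq l (n+3) = l * tseq l (n+2) - tseq l (n+1) := rfl
      have ht2 : tseq l (n+2) = l * tseq l (n+1) - tseq l n := rfl
      rw [hd, ht, ih.1, ih.2, ht2]; ring
  exact fun j => (key j).1

lemma dseq_interp (l a : ℝ) (N : ℕ) : ∀ j : ℕ, j ≤ N →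
    tseq l N * dseq l a j = tseq l (N-j) * a + tseq l j * dseq l a N := by
  have key : ∀ j : ℕ, (j ≤ N →
      tseq l N * dseq l a j = tseq l (N-j) * a + tseq l j * dseq l a N) ∧
      (j+1 ≤ N →
      tseq l N * dseq l a (j+1) = tseq l (N-(j+1)) * a + tseq l (j+1) * dseq l a N) := by
    intro j
    induction j with
    | zero =>
      constructor
      · intro _; simp [dseq, tseq]
      · intro h1
        obtain ⟨m, rfl⟩ : ∃ m, N = m + 1 := ⟨N - 1, by omega⟩
        have : dseq l a (m+1) = tseq l (m+1) - a * tseq l m := dseq_eq_tseq l a m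
        simp only [dseq, tseq, Nat.add_sub_cancel]
        rw [this]; ring
    | succ n ih =>
      refine ⟨ih.2, ?_⟩
      intro h2
      obtain ⟨k, hk⟩ : ∃ k, N - (n+2) = k := ⟨N - (n+2), rfl⟩
      have hk2 : N - (n+1) = k+1 := by omega
      have hk1 : N - n = k+2 := by omega
      have hd : dseq l a (n+2) = l * dseq l a (n+1) - dseq l a n := rfl
      have ht : tseq l (k+2) = l * tseq l (k+1) - tseq l k := rfl
      have i1 := ih.1 (by omega)
      have i2 := ih.2 (by omega)
      rw [hk1] at i1; rw [hk2] at i2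
      have htj : tseq l (n+2) = l * tseq l (n+1) - tseq l n := rfl
      rw [hd, hk, htj]
      linear_combination l * i2 - i1 - a * ht
  exact fun j => (key j).1

set_option maxHeartbeats 1000000 in
lemma hecke_aux (p : ℕ) (hp : 3 ≤ p) (θ l D a α : ℝ)
    (hθ : θ = Real.pi / p) (hlval : l = 2 * Real.cos θ)
    (hD : D = Real.sqrt (l^2+4))
    (ha : a = (3*l+D)/(4*l^2-2)) (hα : α = (3*l+D)/2) :
    pq l α 0 = 3 ∧
    (∀ j : ℕ, 1 ≤ j → j ≤ p - 3 → pq l α j = 1) ∧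
    cq l α (p-2) = α := by
  have hppos : (0:ℝ) < (p:ℝ) := by exact_mod_cast (by omega : 0 < p)
  have hp3r : (3:ℝ) ≤ (p:ℝ) := by exact_mod_cast hp
  have hθpos : 0 < θ := by rw [hθ]; positivity
  have hθle : θ ≤ π/3 := by
    rw [hθ, div_le_div_iff₀ hppos (by norm_num)]
    nlinarith [Real.pi_pos]
  have hθltpi : θ < π := lt_of_le_of_lt hθle (by linarith [Real.pi_pos])
  have hc : 1/2 ≤ Real.cos θ := by
    rw [← Real.cos_pi_div_three]
    exact Real.cos_le_cos_of_nonneg_of_le_pi hθpos.le (by linarith [Real.pi_pos]) hθle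
  have hl1 : 1 ≤ l := by rw [hlval]; linarith
  have hlpos : (0:ℝ) < l := by linarith
  have hs : 0 < Real.sin θ := Real.sin_pos_of_pos_of_lt_pi hθpos hθltpi
  have hD2 : D^2 = l^2+4 := by rw [hD]; exact Real.sq_sqrt (by positivity)
  have hDpos : 0 < D := by rw [hD]; exact Real.sqrt_pos.mpr (by positivity)
  have hDl : l < D := by nlinarith
  have hD3 : D < 3*l := by nlinarith
  have hden : (0:ℝ) < 4*l^2 - 2 := by nlinarith
  have hapos : 0 < a := by rw [ha]; exact div_pos (by linarith) hden
  -- tseq facts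
  have htsin : ∀ j : ℕ, tseq l j * Real.sin θ = Real.sin (j * θ) := by
    rw [hlval]; exact tseq_sin θ
  have hπp : (p:ℝ) * θ = π := by rw [hθ]; field_simp
  have htpos : ∀ j : ℕ, 1 ≤ j → j ≤ p-1 → 0 < tseq l j := by
    intro j h1 h2
    have hj1 : (1:ℝ) ≤ (j:ℝ) := by exact_mod_cast h1
    have hjle : (j:ℝ) ≤ (p:ℝ) - 1 := by
      have : (j:ℝ) + 1 ≤ (p:ℝ) := by exact_mod_cast (by omega : j + 1 ≤ p)
      linarith
    have hjθ : 0 < (j:ℝ)*θ := by positivity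
    have hjθ2 : (j:ℝ)*θ < π := by nlinarith [hπp]
    have hsin := Real.sin_pos_of_pos_of_lt_pi hjθ hjθ2
    have h := htsin j
    nlinarith [h, hs, hsin]
  have htnonneg : ∀ j : ℕ, j ≤ p-1 → 0 ≤ tseq l j := by
    intro j hj
    rcases Nat.eq_zero_or_pos j with h|h
    · subst h; simp [tseq]
    · exact (htpos j h hj).le
  have htp1 : tseq l (p-1) = 1 := by
    have h := htsin (p-1)
    have hcast : ((p-1:ℕ):ℝ) = (p:ℝ) - 1 := by
      push_cast [Nat.cast_sub (by omega : 1 ≤ p)]; ring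
    rw [hcast, show ((p:ℝ)-1)*θ = π - θ by rw [← hπp]; ring, Real.sin_pi_sub] at h
    exact mul_right_cancel₀ hs.ne' (by linarith [h])
  have htp2 : tseq l (p-2) = l := by
    have h := htsin (p-2)
    have hcast : ((p-2:ℕ):ℝ) = (p:ℝ) - 2 := by
      push_cast [Nat.cast_sub (by omega : 2 ≤ p)]; ring
    rw [hcast, show ((p:ℝ)-2)*θ = π - 2*θ by rw [← hπp]; ring, Real.sin_pi_sub,
      Real.sin_two_mul] at h
    have h2 : tseq l (p-2) * Real.sin θ = l * Real.sin θ := by rw [h, hlval]; ring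
    exact mul_right_cancel₀ hs.ne' h2
  have htp3 : tseq l (p-3) = l^2 - 1 := by
    have hrec : tseq l ((p-3)+2) = l * tseq l ((p-3)+1) - tseq l (p-3) := rfl
    rw [show (p-3)+2 = p-1 by omega, show (p-3)+1 = p-2 by omega, htp1, htp2] at hrec
    linear_combination hrec
  -- d facts
  have hdp2 : dseq l a (p-2) = l - a*(l^2-1) := by
    have h := dseq_eq_tseq l a (p-3)
    rw [show (p-3)+1 = p-2 by omega] at h
    rw [h, htp2, htp3]
  have hABnn : (0:ℝ) ≤ l*(l^2+1) + D*(l^2-1) := by nlinarith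
  have h8 : (l*(l^2+1))^2 = (D*(l^2-1))^2 + 8*l^2 - 4 := by
    linear_combination (-(l^2-1)^2) * hD2
  have hkey : a * (l^2-1) < l := by
    rw [ha, div_mul_eq_mul_div, div_lt_iff₀ hden]
    nlinarith [h8, hABnn, hl1, hDpos]
  have hdp2pos : 0 < dseq l a (p-2) := by rw [hdp2]; linarith
  have hdpos : ∀ j : ℕ, j ≤ p-2 → 0 < dseq l a j := by
    intro j hj
    rcases Nat.eq_zero_or_pos j with h|h
    · subst h; exact hapos
    · have hid := dseq_interp l a (p-2) j hj
      have h1 : 0 ≤ tseq l (p-2-j) * a := mul_nonneg (htnonneg _ (by omega)) hapos.le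
      have h2 : 0 < tseq l j * dseq l a (p-2) := mul_pos (htpos j h (by omega)) hdp2pos
      have h3 : 0 < tseq l (p-2) := by rw [htp2]; exact hlpos
      nlinarith [hid, h1, h2, h3]
  -- floor of α/l is 2
  have hfl0 : ⌊α / l⌋ = 2 := by
    rw [Int.floor_eq_iff]
    constructor
    · push_cast
      rw [le_div_iff₀ hlpos, hα]; nlinarith
    · push_cast
      rw [div_lt_iff₀ hlpos, hα]; nlinarith
  have hcq1 : cq l α 1 = a := by
    have h1 : cq l α 1 = 1 / ((↑⌊cq l α 0 / l⌋ + 1) * l - cq l α 0) := rfl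
    have h0 : cq l α 0 = α := rfl
    rw [h1, h0, hfl0, hα, ha]
    have hX : (0:ℝ) < (((2:ℤ):ℝ) + 1) * l - (3*l+D)/2 := by push_cast; nlinarith
    rw [div_eq_div_iff hX.ne' hden.ne']
    push_cast
    linear_combination ((1:ℝ)/2) * hD2
  -- complete quotient formula by induction
  have hcq : ∀ n : ℕ, n+1 ≤ p-2 →
      cq l α (n+1) = dseq l a n / dseq l a (n+1) := by
    intro n
    induction n with
    | zero =>
      intro _
      rw [hcq1]
      simp [dseq]
    | succ n ih =>
      intro h
      have ihn := ih (by omega)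
      have hdn := hdpos n (by omega)
      have hdn1 := hdpos (n+1) (by omega)
      have hdn2 := hdpos (n+2) (by omega)
      have hdr : dseq l a (n+2) = l * dseq l a (n+1) - dseq l a n := rfl
      have hratio : dseq l a n / dseq l a (n+1) < l := by
        rw [div_lt_iff₀ hdn1]; nlinarith [hdr, hdn2]
      have hfl : ⌊cq l α (n+1) / l⌋ = 0 := by
        rw [ihn, Int.floor_eq_iff]
        constructor
        · push_cast
          exact div_nonneg (div_nonneg hdn.le hdn1.le) hlpos.le
        · push_cast
          have hlt1 : dseq l a n / dseq l a (n + 1) / l < 1 := by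
            rw [div_lt_one hlpos]; linarith
          linarith
      have hstep : cq l α (n+2) = 1 / ((↑⌊cq l α (n+1) / l⌋ + 1) * l - cq l α (n+1)) := rfl
      rw [hstep, hfl, ihn]
      have hX : (0:ℝ) < (((0:ℤ):ℝ) + 1) * l - dseq l a n / dseq l a (n+1) := by
        push_cast; nlinarith [hratio]
      rw [div_eq_div_iff hX.ne' hdn2.ne', hdr]
      push_cast
      field_simp
      ring
  -- floor values for the ones
  have hflone : ∀ n : ℕ, n+2 ≤ p-2 → ⌊cq l α (n+1) / l⌋ = 0 := by
    intro n h
    have ihn := hcq n (by omega)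
    have hdn := hdpos n (by omega)
    have hdn1 := hdpos (n+1) (by omega)
    have hdn2 := hdpos (n+2) (by omega)
    have hdr : dseq l a (n+2) = l * dseq l a (n+1) - dseq l a n := rfl
    rw [ihn, Int.floor_eq_iff]
    constructor
    · push_cast
      exact div_nonneg (div_nonneg hdn.le hdn1.le) hlpos.le
    · push_cast
      have hlt1 : dseq l a n / dseq l a (n + 1) / l < 1 := by
        rw [div_lt_one hlpos, div_lt_iff₀ hdn1]
        nlinarith [hdr, hdn2]
      linarith
  refine ⟨?_, ?_, ?_⟩
  · show ⌊cq l α 0 / l⌋ + 1 = 3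
    rw [show cq l α 0 = α from rfl, hfl0]
    norm_num
  · intro j h1 h2
    obtain ⟨n, rfl⟩ : ∃ n, j = n+1 := ⟨j-1, by omega⟩
    show ⌊cq l α (n+1) / l⌋ + 1 = 1
    rw [hflone n (by omega)]
    norm_num
  · have h := hcq (p-3) (by omega)
    rw [show (p-3)+1 = p-2 by omega] at h
    rw [h]
    rcases eq_or_lt_of_le hp with hp3|hp4
    · -- p = 3
      have hpe : p = 3 := hp3.symm
      subst hpe
      have hl3 : l = 1 := by
        rw [hlval, hθ]
        norm_num [Real.cos_pi_div_three]
      show dseq l a 0 / dseq l a 1 = α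
      have e0 : dseq l a 0 = a := rfl
      have e1 : dseq l a 1 = 1 := rfl
      rw [e0, e1, ha, hα, hl3]
      norm_num
    · -- p ≥ 4
      have hp4' : 4 ≤ p := hp4
      have htp4 : tseq l (p-4) = l^3 - 2*l := by
        have hrec : tseq l ((p-4)+2) = l * tseq l ((p-4)+1) - tseq l (p-4) := rfl
        rw [show (p-4)+2 = p-2 by omega, show (p-4)+1 = p-3 by omega, htp2, htp3] at hrec
        linear_combination hrec
      have hdp3 : dseq l a (p-3) = (l^2-1) - a*(l^3-2*l) := by
        have hh := dseq_eq_tseq l a (p-4)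
        rw [show (p-4)+1 = p-3 by omega] at hh
        rw [hh, htp3, htp4]
      rw [div_eq_iff hdp2pos.ne', hdp3, hdp2, hα, ha]
      have hne : l^2*4-2 ≠ 0 := by linarith
      field_simp
      linear_combination (l^2-1) * hD2

/-- `α = (3λ + √(λ² + 4))/2` has the purely periodic
`λ`-continued fraction with period `(3, 1, …, 1)` containing `p - 3` ones:
`r_0 = 3`, `r_j = 1` for `1 ≤ j ≤ p - 3`, and `α_{p-2} = α`. -/
theorem hecke_extremal_expansion (p : ℕ) (hp : 3 ≤ p) :
    pq (heckeLambda p)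
        ((3 * heckeLambda p + Real.sqrt (heckeLambda p ^ 2 + 4)) / 2) 0 = 3 ∧
    (∀ j : ℕ, 1 ≤ j → j ≤ p - 3 →
      pq (heckeLambda p)
        ((3 * heckeLambda p + Real.sqrt (heckeLambda p ^ 2 + 4)) / 2) j = 1) ∧
    cq (heckeLambda p)
        ((3 * heckeLambda p + Real.sqrt (heckeLambda p ^ 2 + 4)) / 2) (p - 2)
      = (3 * heckeLambda p + Real.sqrt (heckeLambda p ^ 2 + 4)) / 2 :=
  hecke_aux p hp (Real.pi / p) (heckeLambda p)
    (Real.sqrt ((heckeLambda p)^2 + 4))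
    ((3 * heckeLambda p + Real.sqrt ((heckeLambda p)^2 + 4)) / (4 * (heckeLambda p)^2 - 2))
    ((3 * heckeLambda p + Real.sqrt ((heckeLambda p)^2 + 4)) / 2)
    rfl rfl rfl rfl rfl
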